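/- Let τ₁ and τ₂ be disjoint relational signatures and let 𝒞₁ and 𝒞₂ be classes of finite τ₁-structures and finite τ₂-structures, respectively, each closed under isomorphism and induced substructures and having the strong amalgamation property. Then the free superposition 𝒞₁ * 𝒞₂, i.e. the class of finite (τ₁ ∪ τ₂)-structures whose τᵢ-reduct lies in 𝒞ᵢ for i = 1, 2, has the strong amalgamation property. -/

import Mathlib

open FirstOrder FirstOrder.Language CategoryTheory

universe u v u' v' w

/-- The `τ₁`-reduct of a structure in the disjoint union signature `τ₁ ∪ τ₂`. -/
def reductL {L₁ : FirstOrder.Language.{u, v}} {L₂ : FirstOrder.Language.{u', v'}}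
    (M : Bundled.{w} (L₁.sum L₂).Structure) : Bundled.{w} L₁.Structure :=
  ⟨M, (LHom.sumInl : L₁ →ᴸ L₁.sum L₂).reduct M⟩

/-- The `τ₂`-reduct of a structure in the disjoint union signature `τ₁ ∪ τ₂`. -/
def reductR {L₁ : FirstOrder.Language.{u, v}} {L₂ : FirstOrder.Language.{u', v'}}
    (M : Bundled.{w} (L₁.sum L₂).Structure) : Bundled.{w} L₂.Structure :=
  ⟨M, (LHom.sumInr : L₂ →ᴸ L₁.sum L₂).reduct M⟩

/-- The free superposition `𝒞₁ * 𝒞₂`: the class of structures in the disjoint union signature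
whose `τᵢ`-reduct lies in `𝒞ᵢ`. -/
def Superposition (L₁ : FirstOrder.Language.{u, v}) (L₂ : FirstOrder.Language.{u', v'})
    (C₁ : Set (Bundled.{w} L₁.Structure)) (C₂ : Set (Bundled.{w} L₂.Structure)) :
    Set (Bundled.{w} (L₁.sum L₂).Structure) :=
  {M | reductL M ∈ C₁ ∧ reductR M ∈ C₂}

/-- The strong amalgamation property for a class of structures. -/
def StrongAmalgamation (L : FirstOrder.Language.{u, v})
    (K : Set (Bundled.{w} L.Structure)) : Prop :=
  ∀ (A B₁ B₂ : Bundled.{w} L.Structure), A ∈ K → B₁ ∈ K → B₂ ∈ K →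
    ∀ (e₁ : A ↪[L] B₁) (e₂ : A ↪[L] B₂),
      ∃ (C : Bundled.{w} L.Structure) (f₁ : B₁ ↪[L] C) (f₂ : B₂ ↪[L] C),
        C ∈ K ∧ f₁.comp e₁ = f₂.comp e₂ ∧
          Set.range ⇑f₁ ∩ Set.range ⇑f₂ = Set.range ⇑(f₁.comp e₁)

section Aux

variable {L₁ : FirstOrder.Language.{u, v}} {L₂ : FirstOrder.Language.{u', v'}}

/-- An embedding of sum-structures is an embedding of the left reducts. -/
def embLAux [L₁.IsRelational] {M N : Bundled.{w} (L₁.sum L₂).Structure}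
    (f : M ↪[L₁.sum L₂] N) : reductL M ↪[L₁] reductL N where
  toFun := f
  inj' := f.injective
  map_fun' := fun {n} F _ => isEmptyElim F
  map_rel' := fun {n} r x => f.map_rel' (Sum.inl r) x

/-- An embedding of sum-structures is an embedding of the right reducts. -/
def embRAux [L₂.IsRelational] {M N : Bundled.{w} (L₁.sum L₂).Structure}
    (f : M ↪[L₁.sum L₂] N) : reductR M ↪[L₂] reductR N where
  toFun := f
  inj' := f.injective
  map_fun' := fun {n} F _ => isEmptyElim F
  map_rel' := fun {n} r x => f.map_rel' (Sum.inr r) x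

/-- Any subset of a structure over a relational language is a substructure. -/
def relationalSub {L : FirstOrder.Language.{u, v}} [L.IsRelational] {M : Type w}
    [L.Structure M] (s : Set M) : L.Substructure M :=
  ⟨s, fun {n} f => isEmptyElim f⟩

end Aux

/-- If `𝒞₁` and `𝒞₂` are classes of finite structures over disjoint relational signatures,
each closed under isomorphism and induced substructures and with the strong amalgamation
property, then their free superposition `𝒞₁ * 𝒞₂` has the strong amalgamation property. -/
theorem stmt10 (L₁ : FirstOrder.Language.{u, v}) (L₂ : FirstOrder.Language.{u', v'})
    [L₁.IsRelational] [L₂.IsRelational]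
    (C₁ : Set (Bundled.{w} L₁.Structure)) (C₂ : Set (Bundled.{w} L₂.Structure))
    (hfin₁ : ∀ A ∈ C₁, Finite A) (hfin₂ : ∀ A ∈ C₂, Finite A)
    (hiso₁ : ∀ A B : Bundled.{w} L₁.Structure, A ∈ C₁ → Nonempty (A ≃[L₁] B) → B ∈ C₁)
    (hiso₂ : ∀ A B : Bundled.{w} L₂.Structure, A ∈ C₂ → Nonempty (A ≃[L₂] B) → B ∈ C₂)
    (hsub₁ : ∀ M : Bundled.{w} L₁.Structure, M ∈ C₁ →
      ∀ S : L₁.Substructure M, (⟨S, inferInstance⟩ : Bundled.{w} L₁.Structure) ∈ C₁)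
    (hsub₂ : ∀ M : Bundled.{w} L₂.Structure, M ∈ C₂ →
      ∀ S : L₂.Substructure M, (⟨S, inferInstance⟩ : Bundled.{w} L₂.Structure) ∈ C₂)
    (hsa₁ : StrongAmalgamation L₁ C₁) (hsa₂ : StrongAmalgamation L₂ C₂) :
    StrongAmalgamation (L₁.sum L₂) (Superposition L₁ L₂ C₁ C₂) := by
  rintro A B₁ B₂ ⟨hA1, hA2⟩ ⟨hB11, hB12⟩ ⟨hB21, hB22⟩ e₁ e₂
  obtain ⟨D₁, g₁, g₂, hD₁, hg, hr₁⟩ :=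
    hsa₁ _ _ _ hA1 hB11 hB21 (embLAux e₁) (embLAux e₂)
  obtain ⟨D₂, k₁, k₂, hD₂, hk, hr₂⟩ :=
    hsa₂ _ _ _ hA2 hB12 hB22 (embRAux e₁) (embRAux e₂)
  have hg' : ∀ a : A, g₁ (e₁ a) = g₂ (e₂ a) := fun a =>
    congrFun (congrArg DFunLike.coe hg) a
  have hk' : ∀ a : A, k₁ (e₁ a) = k₂ (e₂ a) := fun a =>
    congrFun (congrArg DFunLike.coe hk) a
  have key₁ : ∀ (b : (B₁ : Type w)) (b' : (B₂ : Type w)),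
      g₁ b = g₂ b' ↔ ∃ a : (A : Type w), e₁ a = b ∧ e₂ a = b' := by
    intro b b'
    constructor
    · intro hbb
      have hx : g₁ b ∈ Set.range ⇑g₁ ∩ Set.range ⇑g₂ := ⟨⟨b, rfl⟩, ⟨b', hbb.symm⟩⟩
      rw [hr₁] at hx
      obtain ⟨a, ha⟩ := hx
      have ha1 : g₁ (e₁ a) = g₁ b := ha
      refine ⟨a, g₁.injective ha1, g₂.injective ?_⟩
      rw [← hg' a]; exact ha1.trans hbb
    · rintro ⟨a, rfl, rfl⟩; exact hg' a
  have key₂ : ∀ (b : (B₁ : Type w)) (b' : (B₂ : Type w)),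
      k₁ b = k₂ b' ↔ ∃ a : (A : Type w), e₁ a = b ∧ e₂ a = b' := by
    intro b b'
    constructor
    · intro hbb
      have hx : k₁ b ∈ Set.range ⇑k₁ ∩ Set.range ⇑k₂ := ⟨⟨b, rfl⟩, ⟨b', hbb.symm⟩⟩
      rw [hr₂] at hx
      obtain ⟨a, ha⟩ := hx
      have ha1 : k₁ (e₁ a) = k₁ b := ha
      refine ⟨a, k₁.injective ha1, k₂.injective ?_⟩
      rw [← hk' a]; exact ha1.trans hbb
    · rintro ⟨a, rfl, rfl⟩; exact hk' a
  set q₁ : (B₁ : Type w) ⊕ (B₂ : Type w) → (D₁ : Type w) := Sum.elim ⇑g₁ ⇑g₂ with hq₁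
  set q₂ : (B₁ : Type w) ⊕ (B₂ : Type w) → (D₂ : Type w) := Sum.elim ⇑k₁ ⇑k₂ with hq₂
  have hker : ∀ u v, q₁ u = q₁ v ↔ q₂ u = q₂ v := by
    rintro (b | b) (b' | b')
    · show g₁ b = g₁ b' ↔ k₁ b = k₁ b'; exact g₁.injective.eq_iff.trans k₁.injective.eq_iff.symm
    · exact (key₁ b b').trans (key₂ b b').symm
    · show g₂ b = g₁ b' ↔ k₂ b = k₁ b'
      rw [eq_comm, key₁ b' b, @eq_comm _ (k₂ b), key₂ b' b]
    · show g₂ b = g₂ b' ↔ k₂ b = k₂ b'; exact g₂.injective.eq_iff.trans k₂.injective.eq_iff.symm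
  set Sub₁ : L₁.Substructure D₁ := relationalSub (Set.range q₁) with hSub₁
  set Sub₂ : L₂.Substructure D₂ := relationalSub (Set.range q₂) with hSub₂
  set r₁ : (B₁ : Type w) ⊕ (B₂ : Type w) → ↥Sub₁ := fun u => ⟨q₁ u, ⟨u, rfl⟩⟩ with hr₁'
  set r₂ : (B₁ : Type w) ⊕ (B₂ : Type w) → ↥Sub₂ := fun u => ⟨q₂ u, ⟨u, rfl⟩⟩ with hr₂'
  have hsurj₁ : Function.Surjective r₁ := by
    rintro ⟨x, hx⟩
    have hx' : ∃ u, q₁ u = x := hx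
    obtain ⟨u, rfl⟩ := hx'
    exact ⟨u, rfl⟩
  have hsurj₂ : Function.Surjective r₂ := by
    rintro ⟨x, hx⟩
    have hx' : ∃ u, q₂ u = x := hx
    obtain ⟨u, rfl⟩ := hx'
    exact ⟨u, rfl⟩
  set t : ↥Sub₁ → ↥Sub₂ := fun x => r₂ (Function.surjInv hsurj₁ x) with ht'
  have ht : ∀ u, t (r₁ u) = r₂ u := by
    intro u
    have h1 : r₁ (Function.surjInv hsurj₁ (r₁ u)) = r₁ u := Function.surjInv_eq hsurj₁ (r₁ u)
    have h2 : q₁ (Function.surjInv hsurj₁ (r₁ u)) = q₁ u := congrArg Subtype.val h1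
    exact Subtype.ext ((hker _ _).mp h2)
  have htbij : Function.Bijective t := by
    constructor
    · intro x y hxy
      have h2 : q₂ (Function.surjInv hsurj₁ x) = q₂ (Function.surjInv hsurj₁ y) :=
        congrArg Subtype.val hxy
      have h1 : q₁ (Function.surjInv hsurj₁ x) = q₁ (Function.surjInv hsurj₁ y) :=
        (hker _ _).mpr h2
      calc x = r₁ (Function.surjInv hsurj₁ x) := (Function.surjInv_eq hsurj₁ x).symm
        _ = r₁ (Function.surjInv hsurj₁ y) := Subtype.ext h1
        _ = y := Function.surjInv_eq hsurj₁ y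
    · intro y
      obtain ⟨u, rfl⟩ := hsurj₂ y
      exact ⟨r₁ u, ht u⟩
  set β : ↥Sub₁ ≃ ↥Sub₂ := Equiv.ofBijective t htbij with hβ'
  have hβ : ∀ u, β (r₁ u) = r₂ u := ht
  letI i2 : L₂.Structure ↥Sub₁ :=
    { funMap := fun {n} F _ => isEmptyElim F
      RelMap := fun {n} r y => Structure.RelMap r (fun i => ((β (y i) : ↥Sub₂) : (D₂ : Type w))) }
  letI iC : (L₁.sum L₂).Structure ↥Sub₁ := Language.sumStructure L₁ L₂ ↥Sub₁
  refine ⟨⟨↥Sub₁, iC⟩, ?_, ?_, ⟨?_, ?_⟩, ?_, ?_⟩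
  · exact { toFun := fun b => r₁ (Sum.inl b)
            inj' := fun b b' h => g₁.injective (congrArg Subtype.val h)
            map_fun' := fun {n} F _ => isEmptyElim F
            map_rel' := fun {n} r x => by
              cases r with
              | inl r => exact g₁.map_rel' r x
              | inr r =>
                have hv : (fun i => ((β (r₁ (Sum.inl (x i))) : ↥Sub₂) : (D₂ : Type w))) = ⇑k₁ ∘ x :=
                  funext fun i => congrArg Subtype.val (hβ (Sum.inl (x i)))
                show Structure.RelMap r
                    (fun i => ((β (r₁ (Sum.inl (x i))) : ↥Sub₂) : (D₂ : Type w))) ↔ _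
                rw [hv]
                exact k₁.map_rel' r x }
  · exact { toFun := fun b => r₁ (Sum.inr b)
            inj' := fun b b' h => g₂.injective (congrArg Subtype.val h)
            map_fun' := fun {n} F _ => isEmptyElim F
            map_rel' := fun {n} r x => by
              cases r with
              | inl r => exact g₂.map_rel' r x
              | inr r =>
                have hv : (fun i => ((β (r₁ (Sum.inr (x i))) : ↥Sub₂) : (D₂ : Type w))) = ⇑k₂ ∘ x :=
                  funext fun i => congrArg Subtype.val (hβ (Sum.inr (x i)))
                show Structure.RelMap r
                    (fun i => ((β (r₁ (Sum.inr (x i))) : ↥Sub₂) : (D₂ : Type w))) ↔ _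
                rw [hv]
                exact k₂.map_rel' r x }
  · -- reductL C ∈ C₁
    exact hsub₁ D₁ hD₁ Sub₁
  · -- reductR C ∈ C₂
    refine hiso₂ ⟨↥Sub₂, inferInstance⟩ _ (hsub₂ D₂ hD₂ Sub₂) ⟨?_⟩
    exact { toEquiv := β.symm
            map_fun' := fun {n} F _ => isEmptyElim F
            map_rel' := fun {n} r x => by
              have hv : (fun i => ((β (β.symm (x i)) : ↥Sub₂) : (D₂ : Type w)))
                  = fun i => ((x i : ↥Sub₂) : (D₂ : Type w)) :=
                funext fun i => congrArg Subtype.val (β.apply_symm_apply (x i))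
              show Structure.RelMap r (fun i => ((β (β.symm (x i)) : ↥Sub₂) : (D₂ : Type w)))
                  ↔ Structure.RelMap r (fun i => ((x i : ↥Sub₂) : (D₂ : Type w)))
              rw [hv] }
  · -- commutativity
    apply Embedding.ext
    intro a
    exact Subtype.ext (hg' a)
  · -- ranges
    ext x
    constructor
    · rintro ⟨⟨b, rfl⟩, ⟨b', hb'⟩⟩
      have hval : g₂ b' = g₁ b := congrArg Subtype.val hb'
      obtain ⟨a, ha1, ha2⟩ := (key₁ b b').mp hval.symm
      exact ⟨a, Subtype.ext (congrArg (⇑g₁) ha1)⟩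
    · rintro ⟨a, rfl⟩
      exact ⟨⟨e₁ a, rfl⟩, ⟨e₂ a, Subtype.ext (hg' a).symm⟩⟩
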